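/- Let x ∈ ℚ^n, r ∈ ℚ with r ≥ 0, and let X ∈ g_x(−r) be such that the centralizer s := {A ∈ gl_n(F) : [A,X] = 0} is a Cartan subalgebra of gl_n(F). Then for every j ∈ ℚ there is a direct sum decomposition g_x(j−r) = [X, g_x(j)] ⊕ (s ∩ g_x(j−r)), and the two summands are orthogonal with respect to the trace pairing (A,B) ↦ tr(AB). -/

import Mathlib

set_option synthInstance.maxHeartbeats 1000000
set_option maxHeartbeats 1000000

noncomputable section

open Polynomial Matrix

variable {k : Type*} [Field k]

/-- The derivation `τ = z·d/dz` on `k((z))`, acting coefficientwise by `n`. -/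
def tauF (f : LaurentSeries k) : LaurentSeries k :=
  ⟨fun n => (n : k) * f.coeff n,
    f.isPWO_support'.mono (fun n hn => by
      simp only [Function.mem_support, ne_eq] at hn ⊢
      exact fun h => hn (by rw [h, mul_zero]))⟩

/-- The Moy–Prasad graded piece `g_x(r)`: the span of the `E_{ij}·z^m` with
`m + x_i − x_j = r`. -/
def Gr {n : ℕ} (x : Fin n → ℚ) (r : ℚ) : Set (Matrix (Fin n) (Fin n) (LaurentSeries k)) :=
  {A | ∀ i j, ∀ m : ℤ, (A i j).coeff m ≠ 0 → (m : ℚ) + x i - x j = r}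

namespace Stmt8Aux

/-- Truncation of a Laurent series to the coefficients `m` with `(m : ℚ) = c`. -/
def projE (c : ℚ) (f : LaurentSeries k) : LaurentSeries k :=
  ⟨fun m => if (m : ℚ) = c then f.coeff m else 0,
    f.isPWO_support'.mono (fun m hm => by
      simp only [Function.mem_support, ne_eq] at hm ⊢
      intro h; apply hm; split <;> simp [h])⟩

@[simp] lemma projE_coeff (c : ℚ) (f : LaurentSeries k) (m : ℤ) :
    (projE c f).coeff m = if (m : ℚ) = c then f.coeff m else 0 := rfl

lemma projE_zero (c : ℚ) : projE (k := k) c 0 = 0 := by ext m; simp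

lemma projE_add (c : ℚ) (f g : LaurentSeries k) :
    projE c (f + g) = projE c f + projE c g := by
  ext m; simp only [projE_coeff, HahnSeries.coeff_add]; split <;> simp

lemma projE_sub (c : ℚ) (f g : LaurentSeries k) :
    projE c (f - g) = projE c f - projE c g := by
  ext m; simp only [projE_coeff, HahnSeries.coeff_sub]; split <;> simp

/-- `projE` bundled as an `AddMonoidHom`. -/
def projEHom (c : ℚ) : LaurentSeries k →+ LaurentSeries k where
  toFun := projE c
  map_zero' := projE_zero c
  map_add' := projE_add c

lemma eq_single_of_forall (f : LaurentSeries k) (a : ℤ) (h : ∀ b, f.coeff b ≠ 0 → b = a) :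
    f = HahnSeries.single a (f.coeff a) := by
  ext b
  rcases eq_or_ne b a with rfl | hb
  · rw [HahnSeries.coeff_single_same]
  · rw [HahnSeries.coeff_single_of_ne hb]
    by_contra hne
    exact hb (h b hne)

lemma projE_single_mul (c : ℚ) (m₀ : ℤ) (cv : k) (g : LaurentSeries k) :
    projE ((m₀ : ℚ) + c) (HahnSeries.single m₀ cv * g)
      = HahnSeries.single m₀ cv * projE c g := by
  ext b
  have h1 : b = (b - m₀) + m₀ := by ring
  rw [projE_coeff, h1, HahnSeries.coeff_single_mul_add, HahnSeries.coeff_single_mul_add,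
    projE_coeff, mul_ite, mul_zero]
  refine if_congr ?_ rfl rfl
  constructor <;> intro hh
  · push_cast at hh ⊢; linarith
  · push_cast at hh ⊢; linarith

lemma projE_mul_single (c : ℚ) (m₀ : ℤ) (cv : k) (g : LaurentSeries k) :
    projE ((m₀ : ℚ) + c) (g * HahnSeries.single m₀ cv)
      = projE c g * HahnSeries.single m₀ cv := by
  ext b
  have h1 : b = (b - m₀) + m₀ := by ring
  rw [projE_coeff, h1, HahnSeries.coeff_mul_single_add, HahnSeries.coeff_mul_single_add,
    projE_coeff, ite_mul, zero_mul]
  refine if_congr ?_ rfl rfl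
  constructor <;> intro hh
  · push_cast at hh ⊢; linarith
  · push_cast at hh ⊢; linarith

/-- Graded-component projection of a matrix of Laurent series. -/
def projM {n : ℕ} (x : Fin n → ℚ) (d : ℚ) (A : Matrix (Fin n) (Fin n) (LaurentSeries k)) :
    Matrix (Fin n) (Fin n) (LaurentSeries k) :=
  Matrix.of fun i j => projE (d - x i + x j) (A i j)

lemma projM_apply {n : ℕ} (x : Fin n → ℚ) (d : ℚ) (A : Matrix (Fin n) (Fin n) (LaurentSeries k))
    (i j : Fin n) : projM x d A i j = projE (d - x i + x j) (A i j) := rfl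

lemma projM_mem {n : ℕ} (x : Fin n → ℚ) (d : ℚ) (A : Matrix (Fin n) (Fin n) (LaurentSeries k)) :
    projM x d A ∈ Gr x d := by
  intro i j m hm
  rw [projM_apply, projE_coeff] at hm
  by_cases h : (m : ℚ) = d - x i + x j
  · linarith
  · simp [h] at hm

lemma projM_of_mem {n : ℕ} {x : Fin n → ℚ} {d : ℚ}
    {A : Matrix (Fin n) (Fin n) (LaurentSeries k)} (hA : A ∈ Gr x d) :
    projM x d A = A := by
  ext i j m
  rw [projM_apply, projE_coeff]
  split
  · rfl
  · rename_i h
    by_contra hne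
    exact h (by have := hA i j m (fun hc => hne hc.symm); linarith)

lemma projM_add {n : ℕ} (x : Fin n → ℚ) (d : ℚ)
    (A B : Matrix (Fin n) (Fin n) (LaurentSeries k)) :
    projM x d (A + B) = projM x d A + projM x d B := by
  ext i j m
  rw [projM_apply, Matrix.add_apply, projE_add]
  rfl

lemma projM_sub {n : ℕ} (x : Fin n → ℚ) (d : ℚ)
    (A B : Matrix (Fin n) (Fin n) (LaurentSeries k)) :
    projM x d (A - B) = projM x d A - projM x d B := by
  ext i j m
  rw [projM_apply, Matrix.sub_apply, projE_sub]
  rfl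

lemma projM_zero {n : ℕ} (x : Fin n → ℚ) (d : ℚ) :
    projM (k := k) x d 0 = 0 := by
  ext i j m
  simp [projM_apply]

lemma Gr_sub {n : ℕ} {x : Fin n → ℚ} {d : ℚ}
    {A B : Matrix (Fin n) (Fin n) (LaurentSeries k)}
    (hA : A ∈ Gr x d) (hB : B ∈ Gr x d) : A - B ∈ Gr x d := by
  intro i j m hm
  rw [Matrix.sub_apply, HahnSeries.coeff_sub] at hm
  by_cases h1 : (A i j).coeff m ≠ 0
  · exact hA i j m h1
  · push_neg at h1
    refine hB i j m (fun h2 => hm ?_)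
    rw [h1, h2, sub_zero]

lemma Gr_mul {n : ℕ} {x : Fin n → ℚ} {a b : ℚ}
    {A B : Matrix (Fin n) (Fin n) (LaurentSeries k)}
    (hA : A ∈ Gr x a) (hB : B ∈ Gr x b) : A * B ∈ Gr x (a + b) := by
  intro i j m hm
  rw [Matrix.mul_apply,
    show (∑ l, A i l * B l j).coeff m = ∑ l, (A i l * B l j).coeff m from
      map_sum (HahnSeries.coeff.addMonoidHom m) _ _] at hm
  obtain ⟨l, -, hl⟩ := Finset.exists_ne_zero_of_sum_ne_zero hm
  have hmem : m ∈ (A i l * B l j).support := hl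
  obtain ⟨p, hp, q, hq, hpq⟩ := HahnSeries.support_mul_subset hmem
  have h1 := hA i l p hp
  have h2 := hB l j q hq
  have hc : ((p + q : ℤ) : ℚ) = (p : ℚ) + q := by push_cast; ring
  subst hpq
  rw [hc]
  linarith

lemma projM_X_mul {n : ℕ} {x : Fin n → ℚ} {r : ℚ}
    {X : Matrix (Fin n) (Fin n) (LaurentSeries k)} (hX : X ∈ Gr x (-r))
    (d d' : ℚ) (hd : d' = d + r) (M : Matrix (Fin n) (Fin n) (LaurentSeries k)) :
    projM x d (X * M) = X * projM x d' M := by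
  refine Matrix.ext fun i j => ?_
  rw [projM_apply, Matrix.mul_apply, Matrix.mul_apply,
    show projE (d - x i + x j) (∑ l, X i l * M l j)
        = ∑ l, projE (d - x i + x j) (X i l * M l j) from
      map_sum (projEHom (d - x i + x j)) _ _]
  refine Finset.sum_congr rfl fun l _ => ?_
  rw [projM_apply]
  by_cases hint : ∃ m₀ : ℤ, (m₀ : ℚ) = -r - x i + x l
  · obtain ⟨m₀, hm₀⟩ := hint
    have hXil : X i l = HahnSeries.single m₀ ((X i l).coeff m₀) :=
      eq_single_of_forall _ _ (fun m hm => by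
        have h1 := hX i l m hm
        have : (m : ℚ) = (m₀ : ℚ) := by rw [hm₀]; linarith
        exact_mod_cast this)
    have harg : d - x i + x j = (m₀ : ℚ) + (d' - x l + x j) := by
      rw [hm₀, hd]; ring
    rw [hXil, harg, projE_single_mul]
  · have hXil : X i l = 0 := by
      ext m
      rw [HahnSeries.coeff_zero]
      by_contra hne
      exact hint ⟨m, by have := hX i l m hne; linarith⟩
    rw [hXil, zero_mul, zero_mul, projE_zero]

lemma projM_mul_X {n : ℕ} {x : Fin n → ℚ} {r : ℚ}
    {X : Matrix (Fin n) (Fin n) (LaurentSeries k)} (hX : X ∈ Gr x (-r))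
    (d d' : ℚ) (hd : d' = d + r) (M : Matrix (Fin n) (Fin n) (LaurentSeries k)) :
    projM x d (M * X) = projM x d' M * X := by
  refine Matrix.ext fun i j => ?_
  rw [projM_apply, Matrix.mul_apply, Matrix.mul_apply,
    show projE (d - x i + x j) (∑ l, M i l * X l j)
        = ∑ l, projE (d - x i + x j) (M i l * X l j) from
      map_sum (projEHom (d - x i + x j)) _ _]
  refine Finset.sum_congr rfl fun l _ => ?_
  rw [projM_apply]
  by_cases hint : ∃ m₀ : ℤ, (m₀ : ℚ) = -r - x l + x j
  · obtain ⟨m₀, hm₀⟩ := hint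
    have hXlj : X l j = HahnSeries.single m₀ ((X l j).coeff m₀) :=
      eq_single_of_forall _ _ (fun m hm => by
        have h1 := hX l j m hm
        have : (m : ℚ) = (m₀ : ℚ) := by rw [hm₀]; linarith
        exact_mod_cast this)
    have harg : d - x i + x j = (m₀ : ℚ) + (d' - x i + x l) := by
      rw [hm₀, hd]; ring
    rw [hXlj, harg, projE_mul_single]
  · have hXlj : X l j = 0 := by
      ext m
      rw [HahnSeries.coeff_zero]
      by_contra hne
      exact hint ⟨m, by have := hX l j m hne; linarith⟩
    rw [hXlj, mul_zero, mul_zero, projE_zero]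

/-- `ad X` as a `k((z))`-linear map on matrices. -/
def adX {n : ℕ} (X : Matrix (Fin n) (Fin n) (LaurentSeries k)) :
    Matrix (Fin n) (Fin n) (LaurentSeries k) →ₗ[LaurentSeries k]
      Matrix (Fin n) (Fin n) (LaurentSeries k) where
  toFun A := X * A - A * X
  map_add' A B := by simp only [mul_add, add_mul]; abel
  map_smul' c A := by
    ext i j
    simp only [RingHom.id_apply, Matrix.sub_apply, Matrix.smul_apply, Matrix.mul_apply,
      smul_eq_mul, Finset.mul_sum, mul_sub]
    rw [Finset.sum_congr rfl fun l (_ : l ∈ Finset.univ) => mul_left_comm (X i l) c (A l j),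
      Finset.sum_congr rfl fun l (_ : l ∈ Finset.univ) => mul_assoc c (A i l) (X l j)]

lemma adX_apply {n : ℕ} (X A : Matrix (Fin n) (Fin n) (LaurentSeries k)) :
    adX X A = X * A - A * X := rfl

end Stmt8Aux

open Stmt8Aux in
/-- let `X ∈ g_x(−r)` (`r ≥ 0`) have centralizer `s` a Cartan subalgebra.
Then for every `j ∈ ℚ`, `g_x(j−r) = [X, g_x(j)] ⊕ (s ∩ g_x(j−r))`, and the two summands
are orthogonal for the trace pairing `(A,B) ↦ tr(AB)`. -/
theorem stmt8 [IsAlgClosed k] [CharZero k] {n : ℕ}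
    (x : Fin n → ℚ) (r : ℚ) (hr : 0 ≤ r)
    (X : Matrix (Fin n) (Fin n) (LaurentSeries k)) (hX : X ∈ Gr x (-r))
    -- the centralizer s = {A | [A,X] = 0} is a Cartan subalgebra: commutative ...
    (hcomm : ∀ a b : Matrix (Fin n) (Fin n) (LaurentSeries k),
      a * X = X * a → b * X = X * b → a * b = b * a)
    -- ... and self-normalizing
    (hnorm : ∀ A : Matrix (Fin n) (Fin n) (LaurentSeries k),
      (∀ b, b * X = X * b → (A * b - b * A) * X = X * (A * b - b * A)) → A * X = X * A) :
    ∀ j : ℚ,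
      -- [X, g_x(j)] ⊆ g_x(j−r)
      (∀ A ∈ Gr (k := k) x j, X * A - A * X ∈ Gr x (j - r)) ∧
      -- spanning
      (∀ Z ∈ Gr (k := k) x (j - r), ∃ A ∈ Gr (k := k) x j,
        ∃ B : Matrix (Fin n) (Fin n) (LaurentSeries k),
          B * X = X * B ∧ B ∈ Gr x (j - r) ∧ Z = (X * A - A * X) + B) ∧
      -- the sum is direct: trivial intersection
      (∀ C : Matrix (Fin n) (Fin n) (LaurentSeries k),
        (∃ A ∈ Gr (k := k) x j, C = X * A - A * X) →
        C * X = X * C → C ∈ Gr x (j - r) → C = 0) ∧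
      -- orthogonality with respect to the trace pairing
      (∀ A ∈ Gr (k := k) x j, ∀ B : Matrix (Fin n) (Fin n) (LaurentSeries k),
        B * X = X * B → B ∈ Gr x (j - r) → ((X * A - A * X) * B).trace = 0) := by
  intro j
  -- bracketing with X shifts the grading by −r
  have hbracket : ∀ A ∈ Gr (k := k) x j, X * A - A * X ∈ Gr x (j - r) := by
    intro A hA
    have h1 : X * A ∈ Gr x (-r + j) := Gr_mul hX hA
    have h2 : A * X ∈ Gr x (j + -r) := Gr_mul hA hX
    have e1 : (-r) + j = j - r := by ring
    have e2 : j + (-r) = j - r := by ring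
    rw [e1] at h1; rw [e2] at h2
    exact Gr_sub h1 h2
  -- the Fitting-style key fact: ker((ad X)²) = ker(ad X), from the Cartan hypotheses
  have key : ∀ A : Matrix (Fin n) (Fin n) (LaurentSeries k),
      X * (X * A - A * X) - (X * A - A * X) * X = 0 → X * A - A * X = 0 := by
    intro A h
    have hC : (X * A - A * X) * X = X * (X * A - A * X) := (sub_eq_zero.mp h).symm
    have hAX : A * X = X * A := by
      refine hnorm A (fun b hb => ?_)
      have hcb : (X * A - A * X) * b = b * (X * A - A * X) := hcomm _ b hC hb
      have hb0 : b * X - X * b = 0 := sub_eq_zero.mpr hb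
      have jac : (A * b - b * A) * X - X * (A * b - b * A)
          = (A * (b * X - X * b) - (b * X - X * b) * A)
            + (b * (X * A - A * X) - (X * A - A * X) * b) := by
        simp only [mul_sub, sub_mul, mul_assoc]; abel
      have hz : (A * b - b * A) * X - X * (A * b - b * A) = 0 := by
        rw [jac, hb0, hcb]
        simp
      exact sub_eq_zero.mp hz
    rw [hAX, sub_self]
  refine ⟨hbracket, ?_, ?_, ?_⟩
  · -- spanning
    intro Z hZ
    have hdisj : Disjoint (LinearMap.ker (adX X)) (LinearMap.range (adX X)) := by
      rw [Submodule.disjoint_def]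
      rintro C hker ⟨A, rfl⟩
      exact key A (LinearMap.mem_ker.mp hker)
    have hsup : LinearMap.ker (adX X) ⊔ LinearMap.range (adX X) = ⊤ := by
      apply Submodule.eq_top_of_disjoint
      · rw [add_comm]
        exact (LinearMap.finrank_range_add_finrank_ker (adX X)).ge
      · exact hdisj
    have hZtop : Z ∈ LinearMap.ker (adX X) ⊔ LinearMap.range (adX X) := by
      rw [hsup]; exact Submodule.mem_top
    obtain ⟨B, hBker, W, hWrange, hZeq⟩ := Submodule.mem_sup.mp hZtop
    obtain ⟨A', rfl⟩ := hWrange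
    have hTB : X * B - B * X = 0 := LinearMap.mem_ker.mp hBker
    have hZeq' : Z = B + (X * A' - A' * X) := hZeq.symm
    refine ⟨projM x j A', projM_mem x j A', projM x (j - r) B, ?_, projM_mem x (j - r) B, ?_⟩
    · -- the projected kernel part still commutes with X
      have h4 := projM_X_mul hX (j - r - r) (j - r) (by ring) B
      have h5 := projM_mul_X hX (j - r - r) (j - r) (by ring) B
      have hz : X * projM x (j - r) B - projM x (j - r) B * X = 0 := by
        rw [← h4, ← h5, ← projM_sub, hTB, projM_zero]
      exact (sub_eq_zero.mp hz).symm
    · -- the decomposition identity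
      have e : Z = projM x (j - r) Z := (projM_of_mem hZ).symm
      have hcalc : projM x (j - r) Z
          = (X * projM x j A' - projM x j A' * X) + projM x (j - r) B := by
        rw [hZeq', projM_add, projM_sub, projM_X_mul hX (j - r) j (by ring),
          projM_mul_X hX (j - r) j (by ring)]
        abel
      exact e.trans hcalc
  · -- directness
    rintro C ⟨A, hA, rfl⟩ hCX hCGr
    refine key A ?_
    rw [hCX, sub_self]
  · -- orthogonality for the trace pairing
    intro A hA B hB hBGr
    rw [sub_mul, Matrix.trace_sub]
    have h : (X * A * B).trace = (A * X * B).trace := by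
      calc (X * A * B).trace = (B * X * A).trace := Matrix.trace_mul_cycle X A B
        _ = (X * B * A).trace := by rw [hB]
        _ = (A * X * B).trace := Matrix.trace_mul_cycle X B A
    rw [h, sub_self]
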